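/- Define σ(α_1,...,α_n)(w) = c(α_1 b(ε_1),...,α_n b(ε_n))(w) for α_i ∈ GL_n(R) and w ∈ R^n \ {0}, where c is the signed open-cone characteristic function over F = R((ε_1))...((ε_n)). Then for β, α_1, ..., α_n ∈ GL_n(R): σ(βα_1, ..., βα_n)(w) = sign(det β) · σ(α_1, ..., α_n)(β^{-1} w). -/

import Mathlib

open Matrix
open scoped BigOperators

noncomputable section

/-- The iterated Laurent series field `ℝ((ε_1))...((ε_n))`, together with its field
structure (built by recursion). -/
def IterData : ℕ → Σ' (T : Type), Field T
  | 0 => ⟨ℝ, inferInstance⟩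
  | (n + 1) =>
    let p := IterData n
    letI : Field p.1 := p.2
    ⟨LaurentSeries p.1, inferInstance⟩

/-- The iterated Laurent series field `F = ℝ((ε_1))...((ε_n))`. -/
def IterLaurent (n : ℕ) : Type := (IterData n).1

instance (n : ℕ) : Field (IterLaurent n) := (IterData n).2

/-- `IterLaurent 0` is definitionally `ℝ`. -/
def toR (x : IterLaurent 0) : ℝ := x

/-- `IterLaurent (n+1)` is definitionally the Laurent series field over `IterLaurent n`. -/
def toLS {n : ℕ} (x : IterLaurent (n + 1)) : LaurentSeries (IterLaurent n) := x

/-- An element of `ℝ((ε_1))...((ε_n))` is *positive* if it is nonzero and the leading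
coefficient (the coefficient of the smallest exponent, exponents being ordered
lexicographically with `ε_{i+1}` infinitesimal with respect to `ε_i`) is positive. -/
def IterPos : ∀ n : ℕ, IterLaurent n → Prop
  | 0, x => 0 < toR x
  | (n + 1), x => toLS x ≠ 0 ∧ IterPos n ((toLS x).coeff (toLS x).order)

/-- The order relation on `ℝ((ε_1))...((ε_n))`: `x < y` iff `y - x` is positive. -/
def llt (n : ℕ) (x y : IterLaurent n) : Prop := IterPos n (y - x)

/-- The embedding of `ℝ` into `ℝ((ε_1))...((ε_n))` as constant series. -/
def realEmb : ∀ n : ℕ, ℝ → IterLaurent n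
  | 0, r => r
  | (n + 1), r => (HahnSeries.C (realEmb n r) : LaurentSeries (IterLaurent n))

/-- The variable `ε_{i+1}` as an element of `ℝ((ε_1))...((ε_n))` (for `i : Fin n`). -/
def epsV : ∀ n : ℕ, Fin n → IterLaurent n
  | (n + 1), i =>
    if h : (i : ℕ) < n then
      (HahnSeries.C (epsV n ⟨i, h⟩) : LaurentSeries (IterLaurent n))
    else (HahnSeries.single (1 : ℤ) 1 : LaurentSeries (IterLaurent n))

open Classical in
/-- The sign of an element of `ℝ((ε_1))...((ε_n))` with respect to the
leading-coefficient positivity. -/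
def sgnIter (n : ℕ) (x : IterLaurent n) : ℤ :=
  if IterPos n x then 1 else if IterPos n (-x) then -1 else 0

open Classical in
/-- The signed open-cone characteristic function over `ℝ((ε_1))...((ε_m))`:
`c(v_1,...,v_n)(w) = sgn det(v_1,...,v_n)` if all the dual-basis coordinates of `w`
with respect to the basis `v_1, ..., v_n` are positive, and `0` otherwise. -/
def cIter (m n : ℕ) (v : Fin n → (Fin n → IterLaurent m)) (w : Fin n → IterLaurent m) : ℤ :=
  let M : Matrix (Fin n) (Fin n) (IterLaurent m) := Matrix.of fun r j => v j r
  if ∀ i, IterPos m ((M⁻¹ *ᵥ w) i) then sgnIter m M.det else 0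

/-- The Shintani cocycle `σ(α_1,...,α_n)(w) = c(α_1 b(ε_1), ..., α_n b(ε_n))(w)`,
where `b(ε) = (1, ε, ..., ε^{n-1})ᵀ` and `w ∈ ℝ^n` is embedded into
`F^n = (ℝ((ε_1))...((ε_n)))^n` as a constant vector. -/
def sigmaC (n : ℕ) (α : Fin n → Matrix (Fin n) (Fin n) ℝ) (w : Fin n → ℝ) : ℤ :=
  cIter n n
    (fun (i : Fin n) (r : Fin n) => ∑ j : Fin n, realEmb n (α i r j) * (epsV n i) ^ (j : ℕ))
    (fun r : Fin n => realEmb n (w r))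

/-- The sign of a real number, as an integer. -/
def sgnR (x : ℝ) : ℤ := if 0 < x then 1 else if x < 0 then -1 else 0

def realEmbHom : ∀ n : ℕ, ℝ →+* IterLaurent n
  | 0 => RingHom.id ℝ
  | (n + 1) => (HahnSeries.C : IterLaurent n →+* LaurentSeries (IterLaurent n)).comp (realEmbHom n)

lemma realEmb_eq (n : ℕ) (r : ℝ) : realEmb n r = realEmbHom n r := by
  induction n with
  | zero => rfl
  | succ n ih => show HahnSeries.C (realEmb n r) = _; rw [ih]; rfl

lemma iterPos_zero_false (n : ℕ) : ¬ IterPos n (0 : IterLaurent n) := by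
  induction n with
  | zero => exact lt_irrefl 0
  | succ n _ => exact fun h => h.1 rfl

lemma iterPos_neg (n : ℕ) (x : IterLaurent n) (h : IterPos n x) : ¬ IterPos n (-x) := by
  induction n with
  | zero =>
    intro h'
    have h1 : (0:ℝ) < toR x := h
    have h2 : (0:ℝ) < -(toR x) := h'
    linarith
  | succ n ih =>
    rintro ⟨_, h2⟩
    have hx : toLS (-x) = -(toLS x) := rfl
    rw [hx, HahnSeries.order_neg, HahnSeries.coeff_neg] at h2
    exact ih _ h.2 h2

lemma iterPos_realEmb_mul (n : ℕ) (r : ℝ) (hr : 0 < r) (x : IterLaurent n) :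
    IterPos n (realEmb n r * x) ↔ IterPos n x := by
  induction n with
  | zero =>
    show 0 < r * toR x ↔ 0 < toR x
    exact mul_pos_iff_of_pos_left hr
  | succ n ih =>
    by_cases hx : x = 0
    · subst hx; rw [mul_zero]
    have hr0 : r ≠ 0 := ne_of_gt hr
    have hc : realEmb n r ≠ 0 := by
      rw [realEmb_eq]; exact fun h => hr0 ((realEmbHom n).injective (h.trans (map_zero _).symm))
    have hfx : toLS x ≠ 0 := hx
    have hCc : (HahnSeries.C (realEmb n r) : LaurentSeries (IterLaurent n)) ≠ 0 :=
      HahnSeries.C_ne_zero hc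
    have hprod : toLS (realEmb (n+1) r * x)
        = (HahnSeries.C (realEmb n r) : LaurentSeries (IterLaurent n)) * toLS x := rfl
    have hne : (HahnSeries.C (realEmb n r) : LaurentSeries (IterLaurent n)) * toLS x ≠ 0 :=
      mul_ne_zero hCc hfx
    have horder : ((HahnSeries.C (realEmb n r) : LaurentSeries (IterLaurent n)) * toLS x).order
        = (toLS x).order := by
      rw [HahnSeries.order_mul hCc hfx, HahnSeries.order_C, zero_add]
    have hcoeff : ((HahnSeries.C (realEmb n r) : LaurentSeries (IterLaurent n)) * toLS x).coeff
          (((HahnSeries.C (realEmb n r) : LaurentSeries (IterLaurent n)) * toLS x).order)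
        = realEmb n r * (toLS x).coeff (toLS x).order := by
      rw [horder]
      have := HahnSeries.coeff_mul_order_add_order
        (HahnSeries.C (realEmb n r) : LaurentSeries (IterLaurent n)) (toLS x)
      rw [HahnSeries.order_C, zero_add] at this
      rw [this, HahnSeries.leadingCoeff_eq, HahnSeries.leadingCoeff_eq,
        HahnSeries.order_C, HahnSeries.C_apply, HahnSeries.coeff_single_same]
    constructor
    · rintro ⟨_, h2⟩
      rw [hprod, hcoeff] at h2
      exact ⟨hfx, (ih _).mp h2⟩
    · rintro ⟨_, h2⟩
      refine ⟨show toLS _ ≠ 0 from hprod ▸ hne, ?_⟩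
      rw [hprod, hcoeff]
      exact (ih _).mpr h2

lemma sgnIter_neg (n : ℕ) (x : IterLaurent n) : sgnIter n (-x) = - sgnIter n x := by
  unfold sgnIter
  rw [neg_neg]
  by_cases h1 : IterPos n x
  · rw [if_neg (iterPos_neg n x h1), if_pos h1, if_pos h1]
  · by_cases h2 : IterPos n (-x)
    · rw [if_pos h2, if_neg h1, if_pos h2]; rfl
    · rw [if_neg h2, if_neg h1, if_neg h1, if_neg h2]; rfl

lemma sgnIter_congr (n : ℕ) (x y : IterLaurent n)
    (hp : IterPos n x ↔ IterPos n y) (hn : IterPos n (-x) ↔ IterPos n (-y)) :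
    sgnIter n x = sgnIter n y := by
  unfold sgnIter
  by_cases h : IterPos n y
  · rw [if_pos (hp.mpr h), if_pos h]
  · rw [if_neg (fun hh => h (hp.mp hh)), if_neg h]
    by_cases h2 : IterPos n (-y)
    · rw [if_pos (hn.mpr h2), if_pos h2]
    · rw [if_neg (fun hh => h2 (hn.mp hh)), if_neg h2]

lemma sgnIter_realEmb_mul (n : ℕ) (r : ℝ) (x : IterLaurent n) :
    sgnIter n (realEmb n r * x) = sgnR r * sgnIter n x := by
  rcases lt_trichotomy r 0 with h | h | h
  · have he : realEmb n r * x = -(realEmb n (-r) * x) := by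
      rw [realEmb_eq, realEmb_eq, map_neg, neg_mul, neg_neg]
    have hpos : 0 < -r := neg_pos.mpr h
    have h1 := iterPos_realEmb_mul n (-r) hpos x
    have h2 : IterPos n (-(realEmb n (-r) * x)) ↔ IterPos n (-x) := by
      rw [← mul_neg]; exact iterPos_realEmb_mul n (-r) hpos (-x)
    rw [he, sgnIter_neg, sgnIter_congr n _ _ h1 h2]
    have : sgnR r = -1 := by simp [sgnR, h, asymm h]
    rw [this, neg_one_mul]
  · subst h
    have h0 : realEmb n 0 = 0 := by rw [realEmb_eq, map_zero]
    rw [h0, zero_mul]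
    have : sgnR 0 = 0 := by simp [sgnR]
    rw [this, zero_mul]
    unfold sgnIter
    rw [neg_zero, if_neg (iterPos_zero_false n), if_neg (iterPos_zero_false n)]
  · have h1 := iterPos_realEmb_mul n r h x
    have h2 : IterPos n (-(realEmb n r * x)) ↔ IterPos n (-x) := by
      rw [← mul_neg]; exact iterPos_realEmb_mul n r h (-x)
    rw [sgnIter_congr n _ _ h1 h2]
    have : sgnR r = 1 := by simp [sgnR, h]
    rw [this, one_mul]


theorem stmt13 (n : ℕ) (β : Matrix (Fin n) (Fin n) ℝ) (hβ : IsUnit β.det)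
    (α : Fin n → Matrix (Fin n) (Fin n) ℝ) (hα : ∀ i, IsUnit (α i).det)
    (w : Fin n → ℝ) (hw : w ≠ 0) :
    sigmaC n (fun i => β * α i) w = sgnR β.det * sigmaC n α (β⁻¹ *ᵥ w) := by
  classical
  set E : ℝ →+* IterLaurent n := realEmbHom n with hE
  set Mof : (Fin n → Matrix (Fin n) (Fin n) ℝ) → Matrix (Fin n) (Fin n) (IterLaurent n) :=
    fun a => Matrix.of fun r i => ∑ j : Fin n, realEmb n (a i r j) * epsV n i ^ (j : ℕ) with hMof
  have hsig : ∀ (a : Fin n → Matrix (Fin n) (Fin n) ℝ) (wv : Fin n → ℝ),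
      sigmaC n a wv =
        if ∀ i, IterPos n (((Mof a)⁻¹ *ᵥ fun r => realEmb n (wv r)) i)
        then sgnIter n (Mof a).det else 0 := fun a wv => rfl
  set Bm : Matrix (Fin n) (Fin n) (IterLaurent n) := β.map ⇑E with hBm
  have hM' : Mof (fun i => β * α i) = Bm * Mof α := by
    ext r i
    simp only [hMof, hBm, Matrix.of_apply, Matrix.mul_apply, Matrix.map_apply, realEmb_eq,
      map_sum, _root_.map_mul, Finset.sum_mul, Finset.mul_sum, mul_assoc]
    rw [Finset.sum_comm]
  have hBdet : Bm.det = E β.det := (RingHom.map_det E β).symm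
  have hEinj : Function.Injective ⇑E := E.injective
  have hEd0 : E β.det ≠ 0 := fun h => hβ.ne_zero (hEinj (h.trans (map_zero E).symm))
  have hBinv : Bm⁻¹ = (β⁻¹).map ⇑E := by
    apply Matrix.inv_eq_right_inv
    rw [hBm, ← Matrix.map_mul, Matrix.mul_nonsing_inv β hβ,
      Matrix.map_one _ (map_zero E) (map_one E)]
  have hwv : ((β⁻¹).map ⇑E) *ᵥ (fun r => realEmb n (w r)) =
      fun r => realEmb n ((β⁻¹ *ᵥ w) r) := by
    funext r
    simp only [Matrix.mulVec, dotProduct, Matrix.map_apply, realEmb_eq, map_sum, _root_.map_mul]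
    rfl
  have hdet' : (Mof (fun i => β * α i)).det = realEmb n β.det * (Mof α).det := by
    rw [hM', Matrix.det_mul, hBdet, realEmb_eq]
  have hinv : (Mof (fun i => β * α i))⁻¹ *ᵥ (fun r => realEmb n (w r)) =
      (Mof α)⁻¹ *ᵥ (fun r => realEmb n ((β⁻¹ *ᵥ w) r)) := by
    rw [hM', Matrix.mul_inv_rev, ← Matrix.mulVec_mulVec, hBinv, hwv]
  rw [hsig, hsig, hinv, hdet']
  by_cases hcond : ∀ i, IterPos n (((Mof α)⁻¹ *ᵥ fun r => realEmb n ((β⁻¹ *ᵥ w) r)) i)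
  · rw [if_pos hcond, if_pos hcond, sgnIter_realEmb_mul]
  · rw [if_neg hcond, if_neg hcond, mul_zero]
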